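/- Let Z be a standard Gaussian random variable (law N(0,1) on ℝ). Let K ≥ 1 and let α, w, ŵ, σ, g : {1, …, K} → ℝ satisfy, for every k: α_k ≥ 0, σ_k ≥ 0, 0 ≤ g_k ≤ 48 σ_k, and ŵ_k ≥ w_k − g_k. Then the probability that Σ_{k=1}^K α_k (ŵ_k + Z σ_k) ≥ Σ_{k=1}^K α_k w_k is at least 1/(4 √π e^{8064}). -/
import Mathlib


open ProbabilityTheory MeasureTheory

lemma tail_lb :
    ENNReal.ofReal (1 / (4 * Real.sqrt Real.pi * Real.exp 8064))
      ≤ gaussianReal 0 1 {z : ℝ | 48 ≤ z} := by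
  have hsub : Set.Icc (48:ℝ) 49 ⊆ {z : ℝ | 48 ≤ z} := fun z hz => hz.1
  refine le_trans ?_ (measure_mono hsub)
  rw [gaussianReal_apply 0 one_ne_zero]
  set c : ℝ := (Real.sqrt (2 * Real.pi))⁻¹ * Real.exp (-(2401/2)) with hc
  have hle : ∫⁻ x in Set.Icc (48:ℝ) 49, ENNReal.ofReal c
      ≤ ∫⁻ x in Set.Icc (48:ℝ) 49, gaussianPDF 0 1 x := by
    refine setLIntegral_mono (measurable_gaussianPDF 0 1) ?_
    intro x hx
    refine ENNReal.ofReal_le_ofReal ?_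
    rw [hc, gaussianPDFReal]
    push_cast
    simp only [sub_zero, mul_one]
    refine mul_le_mul_of_nonneg_left ?_ (by positivity)
    exact Real.exp_le_exp.mpr (by nlinarith [hx.1, hx.2])
  rw [setLIntegral_const, Real.volume_Icc] at hle
  norm_num at hle
  refine le_trans ?_ hle
  refine ENNReal.ofReal_le_ofReal ?_
  rw [hc, div_le_iff₀ (by positivity)]
  have h2 : Real.sqrt (2 * Real.pi) ≤ 2 * Real.sqrt Real.pi := by
    rw [Real.sqrt_mul (by norm_num)]
    have : Real.sqrt 2 ≤ 2 := by
      nlinarith [Real.sq_sqrt (by norm_num : (0:ℝ) ≤ 2), Real.sqrt_nonneg 2]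
    nlinarith [Real.sqrt_nonneg Real.pi]
  have h3 : (1:ℝ) ≤ Real.exp (-(2401/2)) * Real.exp 8064 := by
    rw [← Real.exp_add]
    have : (0:ℝ) ≤ -(2401/2) + 8064 := by norm_num
    calc (1:ℝ) = Real.exp 0 := (Real.exp_zero).symm
    _ ≤ _ := Real.exp_le_exp.mpr this
  have hsq : (1:ℝ) ≤ Real.sqrt (2 * Real.pi) := by
    rw [show (1:ℝ) = Real.sqrt 1 by simp]
    exact Real.sqrt_le_sqrt (by nlinarith [Real.pi_gt_three])
  calc (1:ℝ) ≤ Real.exp (-(2401/2)) * Real.exp 8064 := h3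
  _ ≤ (Real.sqrt (2*Real.pi))⁻¹ * Real.exp (-(2401/2)) * (4 * Real.sqrt Real.pi * Real.exp 8064) := by
      have hpos : (0:ℝ) < Real.sqrt (2*Real.pi) := by positivity
      have hinv : (1:ℝ) ≤ (Real.sqrt (2*Real.pi))⁻¹ * (2 * Real.sqrt Real.pi) := by
        calc (1:ℝ) = (Real.sqrt (2*Real.pi))⁻¹ * Real.sqrt (2*Real.pi) :=
              (inv_mul_cancel₀ hpos.ne').symm
        _ ≤ _ := mul_le_mul_of_nonneg_left h2 (by positivity)
      nlinarith [Real.exp_pos (-(2401/2:ℝ)), Real.exp_pos (8064:ℝ), Real.sqrt_nonneg Real.pi,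
        mul_pos (Real.exp_pos (-(2401/2:ℝ))) (Real.exp_pos (8064:ℝ))]

/-- If `Z ~ N(0,1)` (standard Gaussian measure on `ℝ`) and for all `k` we have
`α k ≥ 0`, `σ k ≥ 0`, `0 ≤ g k ≤ 48 σ k`, `ŵ k ≥ w k - g k`, then
`P(∑ α k (ŵ k + Z σ k) ≥ ∑ α k w k) ≥ 1 / (4 √π e^{8064})`. -/
theorem stmt_5 (K : ℕ) (hK : 1 ≤ K) (α w wHat σ g : Fin K → ℝ)
    (hα : ∀ k, 0 ≤ α k) (hσ : ∀ k, 0 ≤ σ k)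
    (hg0 : ∀ k, 0 ≤ g k) (hg48 : ∀ k, g k ≤ 48 * σ k)
    (hwHat : ∀ k, w k - g k ≤ wHat k) :
    ENNReal.ofReal (1 / (4 * Real.sqrt Real.pi * Real.exp 8064))
      ≤ gaussianReal 0 1 {z : ℝ | ∑ k, α k * w k ≤ ∑ k, α k * (wHat k + z * σ k)} := by
  refine le_trans tail_lb (measure_mono ?_)
  intro z hz
  simp only [Set.mem_setOf_eq] at hz ⊢
  refine Finset.sum_le_sum fun k _ => ?_
  have h1 : w k ≤ wHat k + z * σ k := by
    have : 48 * σ k ≤ z * σ k := mul_le_mul_of_nonneg_right hz (hσ k)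
    nlinarith [hwHat k, hg48 k]
  exact mul_le_mul_of_nonneg_left h1 (hα k)
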